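/- Let F be a field, n ≥ 1, and I_n the ideal of F[x_{n×n}] generated by same-row products, same-column products, row sums, and column sums of the variable matrix. For subsets S, T ⊆ [n], the element a_{S,T} = Σ over injections f: S → T of Π_{i∈S} x_{i,f(i)} satisfies a_{S,T} ≡ Π_{i∈S} (Σ_{j∈T} x_{i,j}) modulo I_n. -/
import Mathlib


open MvPolynomial

/-- The ideal generated by all products of two variables in the same row, all
products of two variables in the same column, all row sums, and all column sums
of the n × n variable matrix. -/
noncomputable def matIdeal (F : Type*) [Field F] (n : ℕ) :
    Ideal (MvPolynomial (Fin n × Fin n) F) :=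
  Ideal.span {p | (∃ i j j', p = MvPolynomial.X (i, j) * MvPolynomial.X (i, j')) ∨
    (∃ i i' j, p = MvPolynomial.X (i, j) * MvPolynomial.X (i', j)) ∨
    (∃ i, p = ∑ j, MvPolynomial.X (i, j)) ∨
    (∃ j, p = ∑ i, MvPolynomial.X (i, j))}

/-- \`a_{S,T}\`: the sum over injections \`f : S → T\` of \`∏_{i ∈ S} x_{i, f i}\`. -/
noncomputable def aST {F : Type*} [Field F] {n : ℕ} (S T : Finset (Fin n)) :
    MvPolynomial (Fin n × Fin n) F :=
  ∑ f ∈ Finset.univ.filter (fun f : S → T => Function.Injective f),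
    ∏ i : S, MvPolynomial.X ((i : Fin n), ((f i : Fin n)))

/-- a_{S,T} is congruent to ∏_{i ∈ S} (∑_{j ∈ T} x_{i,j}) modulo I_n. -/
theorem aST_congruence (F : Type*) [Field F] (n : ℕ) (hn : 1 ≤ n)
    (S T : Finset (Fin n)) :
    (aST S T : MvPolynomial (Fin n × Fin n) F) -
      ∏ i ∈ S, (∑ j ∈ T, X (i, j)) ∈ matIdeal F n := by
  classical
  have hexp : (∏ i ∈ S, (∑ j ∈ T, (X (i, j) : MvPolynomial (Fin n × Fin n) F))) =
      ∑ f : S → T, ∏ i : S, X ((i : Fin n), (f i : Fin n)) := by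
    have h1 : (∏ i ∈ S, (∑ j ∈ T, (X (i, j) : MvPolynomial (Fin n × Fin n) F))) =
        ∏ i : S, ∑ j : T, X ((i : Fin n), (j : Fin n)) := by
      rw [← Finset.prod_coe_sort]
      exact Finset.prod_congr rfl fun i _ => (Finset.sum_coe_sort T _).symm
    rw [h1, Finset.prod_univ_sum (fun _ => (Finset.univ : Finset T))]
    rw [Fintype.piFinset_univ]
  rw [hexp, aST]
  rw [← Finset.sum_filter_add_sum_filter_not Finset.univ
    (fun f : S → T => Function.Injective f)]
  have hrest : ∀ f ∈ Finset.univ.filter (fun f : S → T => ¬ Function.Injective f),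
      (∏ i : S, (X ((i : Fin n), (f i : Fin n)) : MvPolynomial (Fin n × Fin n) F))
        ∈ matIdeal F n := by
    intro f hf
    simp only [Finset.mem_filter, Function.Injective, not_forall] at hf
    obtain ⟨i, i', hfi, hne⟩ := hf.2
    set g : S → MvPolynomial (Fin n × Fin n) F :=
      fun x => X ((x : Fin n), (f x : Fin n)) with hg
    have hmem : g i * g i' ∈ matIdeal F n := by
      apply Ideal.subset_span
      right; left
      exact ⟨i, i', (f i : Fin n), by simp only [hg]; rw [hfi]⟩
    have hi' : i' ∈ Finset.univ.erase i :=
      Finset.mem_erase.mpr ⟨Ne.symm hne, Finset.mem_univ i'⟩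
    have h1 : (∏ x : S, g x) =
        g i * g i' * ∏ x ∈ (Finset.univ.erase i).erase i', g x := by
      rw [mul_assoc, Finset.mul_prod_erase _ g hi',
        Finset.mul_prod_erase _ g (Finset.mem_univ i)]
    rw [h1]
    exact Ideal.mul_mem_right _ _ hmem
  have hsum := Ideal.sum_mem (matIdeal F n) hrest
  have := (matIdeal F n).neg_mem hsum
  convert this using 1
  ring
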